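/- Let a_n > 0 and u_n = sqrt(a_1 + sqrt(a_2 + ... + sqrt(a_n))). Then for every n ≥ 1, u_{n+1} - u_n ≤ sqrt(a_{n+1}) / (2^n · sqrt(a_1) · sqrt(a_2) · ... · sqrt(a_n)). -/

import Mathlib

/-- `nest a n i = sqrt (a i + sqrt (a (i+1) + ⋯ + sqrt (a n)))`;
the `n`-th approximant `u n` of the continued square root is `nest a n 1`. -/
noncomputable def nest (a : ℕ → ℝ) (n : ℕ) : ℕ → ℝ
  | i => if _ : i ≤ n then Real.sqrt (a i + nest a n (i + 1)) else 0
termination_by i => n + 1 - i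
decreasing_by omega

lemma nest_of_le (a : ℕ → ℝ) {n i : ℕ} (h : i ≤ n) :
    nest a n i = Real.sqrt (a i + nest a n (i + 1)) := by
  rw [nest, dif_pos h]

lemma nest_of_gt (a : ℕ → ℝ) {n i : ℕ} (h : n < i) : nest a n i = 0 := by
  rw [nest, dif_neg (by omega)]

lemma nest_nonneg (a : ℕ → ℝ) (n i : ℕ) : 0 ≤ nest a n i := by
  rw [nest]; split
  · exact Real.sqrt_nonneg _
  · exact le_refl 0

lemma nest_mono (a : ℕ → ℝ) (n : ℕ) : ∀ i, nest a n i ≤ nest a (n + 1) i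
  | i => by
    rcases le_or_gt i n with h | h
    · rw [nest_of_le a h, nest_of_le a (show i ≤ n + 1 by omega)]
      have := nest_mono a n (i + 1)
      exact Real.sqrt_le_sqrt (by linarith)
    · rw [nest_of_gt a h]
      exact nest_nonneg _ _ _
termination_by i => n + 2 - i
decreasing_by omega

lemma sqrt_sub_le {u v w : ℝ} (hw : 0 < w) (hwu : w ≤ u) (hwv : w ≤ v) (hvu : v ≤ u) :
    Real.sqrt u - Real.sqrt v ≤ (u - v) / (2 * Real.sqrt w) := by
  have hsw : 0 < Real.sqrt w := Real.sqrt_pos.mpr hw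
  rw [le_div_iff₀ (by positivity)]
  have h1 : 0 ≤ Real.sqrt u - Real.sqrt v := sub_nonneg.mpr (Real.sqrt_le_sqrt hvu)
  have h2 : 2 * Real.sqrt w ≤ Real.sqrt u + Real.sqrt v := by
    have hu := Real.sqrt_le_sqrt hwu
    have hv := Real.sqrt_le_sqrt hwv
    linarith
  have h3 : (Real.sqrt u - Real.sqrt v) * (2 * Real.sqrt w)
      ≤ (Real.sqrt u - Real.sqrt v) * (Real.sqrt u + Real.sqrt v) :=
    mul_le_mul_of_nonneg_left h2 h1
  have h4 : (Real.sqrt u - Real.sqrt v) * (Real.sqrt u + Real.sqrt v) = u - v := by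
    have hu := Real.sq_sqrt (le_trans hw.le hwu)
    have hv := Real.sq_sqrt (le_trans hw.le hwv)
    nlinarith
  linarith

lemma prod_pos_sqrt (a : ℕ → ℝ) (ha : ∀ n, 1 ≤ n → 0 < a n) {i n : ℕ} (hi : 1 ≤ i) :
    0 < ∏ j ∈ Finset.Icc i n, Real.sqrt (a j) := by
  apply Finset.prod_pos
  intro j hj
  exact Real.sqrt_pos.mpr (ha j (by simp [Finset.mem_Icc] at hj; omega))

lemma key (a : ℕ → ℝ) (ha : ∀ n, 1 ≤ n → 0 < a n) (n : ℕ) :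
    ∀ i, 1 ≤ i → i ≤ n →
      nest a (n + 1) i - nest a n i ≤
        Real.sqrt (a (n + 1)) / (2 ^ (n + 1 - i) * ∏ j ∈ Finset.Icc i n, Real.sqrt (a j))
  | i => fun hi1 hin => by
    have hai : 0 < a i := ha i hi1
    rcases eq_or_lt_of_le hin with rfl | hlt
    · -- base case i = n
      rw [nest_of_le a (le_refl i), nest_of_le a (by omega : i ≤ i + 1),
        nest_of_gt a (by omega : i < i + 1), nest_of_le a (by omega : i + 1 ≤ i + 1),
        nest_of_gt a (by omega : i + 1 < i + 2)]
      have h := sqrt_sub_le (u := a i + Real.sqrt (a (i + 1) + 0)) (v := a i + 0) hai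
        (by nlinarith [Real.sqrt_nonneg (a (i + 1) + 0)]) (by linarith) (by nlinarith [Real.sqrt_nonneg (a (i + 1) + 0)])
      simp only [Nat.add_sub_cancel_left, pow_one, Finset.Icc_self, Finset.prod_singleton]
      calc Real.sqrt (a i + Real.sqrt (a (i + 1) + 0)) - Real.sqrt (a i + 0)
          ≤ (a i + Real.sqrt (a (i + 1) + 0) - (a i + 0)) / (2 * Real.sqrt (a i)) := h
        _ = Real.sqrt (a (i + 1)) / (2 * Real.sqrt (a i)) := by ring_nf
    · -- inductive step i < n
      have IH := key a ha n (i + 1) (by omega) (by omega)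
      set x := nest a (n + 1) (i + 1) with hx
      set y := nest a n (i + 1) with hy
      have hyx : y ≤ x := nest_mono a n (i + 1)
      have hy0 : 0 ≤ y := nest_nonneg _ _ _
      rw [nest_of_le a (by omega : i ≤ n + 1), nest_of_le a (by omega : i ≤ n), ← hx, ← hy]
      have h := sqrt_sub_le (u := a i + x) (v := a i + y) hai (by linarith) (by linarith)
        (by linarith)
      have hsai : 0 < Real.sqrt (a i) := Real.sqrt_pos.mpr hai
      have hP : 0 < ∏ j ∈ Finset.Icc (i + 1) n, Real.sqrt (a j) :=
        prod_pos_sqrt a ha (by omega)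
      have hsplit : ∏ j ∈ Finset.Icc i n, Real.sqrt (a j)
          = Real.sqrt (a i) * ∏ j ∈ Finset.Icc (i + 1) n, Real.sqrt (a j) := by
        have hset : Finset.Icc i n = insert i (Finset.Icc (i + 1) n) := by
          ext j; simp only [Finset.mem_Icc, Finset.mem_insert]; omega
        rw [hset, Finset.prod_insert (by simp)]
      calc Real.sqrt (a i + x) - Real.sqrt (a i + y)
          ≤ (a i + x - (a i + y)) / (2 * Real.sqrt (a i)) := h
        _ = (x - y) / (2 * Real.sqrt (a i)) := by ring_nf
        _ ≤ (Real.sqrt (a (n + 1)) / (2 ^ (n + 1 - (i + 1)) *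
              ∏ j ∈ Finset.Icc (i + 1) n, Real.sqrt (a j))) / (2 * Real.sqrt (a i)) := by
            gcongr
        _ = Real.sqrt (a (n + 1)) /
              (2 ^ (n + 1 - i) * ∏ j ∈ Finset.Icc i n, Real.sqrt (a j)) := by
            rw [div_div, hsplit]
            congr 1
            have : n + 1 - i = (n - i) + 1 := by omega
            have h2 : n + 1 - (i + 1) = n - i := by omega
            rw [this, h2, pow_succ]
            ring
termination_by i => n - i
decreasing_by omega

theorem polya_szego_inequality (a : ℕ → ℝ) (ha : ∀ n, 1 ≤ n → 0 < a n) :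
    ∀ n, 1 ≤ n →
      nest a (n + 1) 1 - nest a n 1 ≤
        Real.sqrt (a (n + 1)) /
          (2 ^ n * ∏ i ∈ Finset.Icc 1 n, Real.sqrt (a i)) := by
  intro n hn
  have h := key a ha n 1 le_rfl hn
  simpa using h
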